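/- For each n, the restriction map p_n : {0,1,2,3}^{n+1} → {0,1,2,3}^n, x ↦ x↾n, is a quotient map of posets with respect to the orders ≤_{n+1} and ≤_n. -/
import Mathlib


/-- The order `≤ₙ` on `P_n = {0,1,2,3}^n`. -/
def leFin {n : ℕ} (x y : Fin n → Fin 4) : Prop :=
  x = y ∨
  (∃ l : Fin n, (∀ k, k < l → x k = y k) ∧ x l = 2 ∧ y l = 3 ∧
    ∀ k, l < k → x k = y k ∧ (x k = 0 ∨ x k = 1)) ∨
  (∃ h : 0 < n, x ⟨0, h⟩ = 0 ∧ y ⟨0, h⟩ = 1 ∧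
    ∀ k : Fin n, 1 ≤ (k : ℕ) → x k = y k ∧ (x k = 0 ∨ x k = 1))

/-- The restriction map `{0,1,2,3}^{n+1} → {0,1,2,3}^n`. -/
def restrictMap (n : ℕ) (x : Fin (n + 1) → Fin 4) : Fin n → Fin 4 :=
  fun k => x k.castSucc

theorem restrict_snoc (n : ℕ) (a : Fin n → Fin 4) :
    restrictMap n (Fin.snoc a 0) = a := by
  funext k
  simp [restrictMap]

/-- the restriction map is a quotient map of posets: it is surjective,
order-preserving, and every related pair downstairs lifts to a related pair upstairs. -/
theorem stmt_8 (n : ℕ) :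
    Function.Surjective (restrictMap n) ∧
    (∀ x y : Fin (n + 1) → Fin 4, leFin x y → leFin (restrictMap n x) (restrictMap n y)) ∧
    ∀ a b : Fin n → Fin 4, leFin a b → ∃ x y : Fin (n + 1) → Fin 4,
      leFin x y ∧ restrictMap n x = a ∧ restrictMap n y = b := by
  refine ⟨?_, ?_, ?_⟩
  · intro a
    exact ⟨Fin.snoc a 0, restrict_snoc n a⟩
  · intro x y h
    rcases h with h | ⟨l, h1, h2, h3, h4⟩ | ⟨h0, h1, h2, h3⟩
    · left; rw [h]
    · by_cases hl : (l : ℕ) < n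
      · right; left
        have hcl : (⟨(l : ℕ), hl⟩ : Fin n).castSucc = l := by
          ext; simp
        refine ⟨⟨(l : ℕ), hl⟩, ?_, ?_, ?_, ?_⟩
        · intro k hk
          exact h1 k.castSucc (by simpa [Fin.lt_def] using hk)
        · simpa [restrictMap, hcl] using h2
        · simpa [restrictMap, hcl] using h3
        · intro k hk
          exact h4 k.castSucc (by simpa [Fin.lt_def] using hk)
      · left
        funext k
        have : k.castSucc < l := by
          simp only [Fin.lt_def, Fin.coe_castSucc]
          omega
        exact h1 k.castSucc this
    · by_cases hn : 0 < n
      · right; right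
        refine ⟨hn, ?_, ?_, ?_⟩
        · have : (⟨0, hn⟩ : Fin n).castSucc = ⟨0, h0⟩ := by ext; simp
          simpa [restrictMap, this] using h1
        · have : (⟨0, hn⟩ : Fin n).castSucc = ⟨0, h0⟩ := by ext; simp
          simpa [restrictMap, this] using h2
        · intro k hk
          exact h3 k.castSucc (by simpa using hk)
      · left
        funext k
        exact absurd k.isLt (by omega)
  · intro a b hab
    refine ⟨Fin.snoc a 0, Fin.snoc b 0, ?_, restrict_snoc n a, restrict_snoc n b⟩
    rcases hab with h | ⟨l, h1, h2, h3, h4⟩ | ⟨h0, h1, h2, h3⟩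
    · left; rw [h]
    · right; left
      refine ⟨l.castSucc, ?_, by simpa using h2, by simpa using h3, ?_⟩
      · intro k hk
        have hk' : (k : ℕ) < n := by
          have := l.isLt
          simp only [Fin.lt_def, Fin.coe_castSucc] at hk
          omega
        have hc : k = (⟨(k : ℕ), hk'⟩ : Fin n).castSucc := by ext; simp
        rw [hc, Fin.snoc_castSucc, Fin.snoc_castSucc]
        exact h1 ⟨(k : ℕ), hk'⟩ (by simpa [Fin.lt_def] using hk)
      · intro k hk
        by_cases hkn : (k : ℕ) < n
        · have hc : k = (⟨(k : ℕ), hkn⟩ : Fin n).castSucc := by ext; simp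
          rw [hc, Fin.snoc_castSucc, Fin.snoc_castSucc]
          exact h4 ⟨(k : ℕ), hkn⟩ (by simpa [Fin.lt_def] using hk)
        · have hc : k = Fin.last n := by ext; have := k.isLt; simp; omega
          rw [hc, Fin.snoc_last, Fin.snoc_last]
          exact ⟨rfl, Or.inl rfl⟩
    · right; right
      refine ⟨Nat.succ_pos n, ?_, ?_, ?_⟩
      · have hc : (⟨0, Nat.succ_pos n⟩ : Fin (n+1)) = (⟨0, h0⟩ : Fin n).castSucc := by
          ext; simp
        rw [hc, Fin.snoc_castSucc]; exact h1
      · have hc : (⟨0, Nat.succ_pos n⟩ : Fin (n+1)) = (⟨0, h0⟩ : Fin n).castSucc := by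
          ext; simp
        rw [hc, Fin.snoc_castSucc]; exact h2
      · intro k hk
        by_cases hkn : (k : ℕ) < n
        · have hc : k = (⟨(k : ℕ), hkn⟩ : Fin n).castSucc := by ext; simp
          rw [hc, Fin.snoc_castSucc, Fin.snoc_castSucc]
          exact h3 ⟨(k : ℕ), hkn⟩ (by simpa using hk)
        · have hc : k = Fin.last n := by ext; have := k.isLt; simp; omega
          rw [hc, Fin.snoc_last, Fin.snoc_last]
          exact ⟨rfl, Or.inl rfl⟩
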